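/- Under the condition (δ+1)²·q_s < 4·δ·q_o with q_o > q_s > 0 and δ ∈ (0,1), the unique stationary point of R1b(p_o, p_r) = N·δ·p_r·((p_o−p_r)/(q_o−q_s) − p_r/q_s) + N·p_o·(1 − (p_o−p_r)/(q_o−q_s)) is (p_o*, p_r*) = (2δ·q_o·(q_o−q_s)/(4δq_o − (δ+1)²q_s), q_s·(δ+1)·(q_o−q_s)/(4δq_o − (δ+1)²q_s)). -/

import Mathlib

lemma quad_deriv (a b c x : ℝ) :
    deriv (fun t : ℝ => a * t ^ 2 + (b * t + c)) x = 2 * a * x + b := by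
  have h : HasDerivAt (fun t : ℝ => a * t ^ 2 + (b * t + c))
      (a * (↑2 * x ^ (2 - 1)) + (b * 1 + 0)) x :=
    ((hasDerivAt_pow 2 x).const_mul a).add
      (((hasDerivAt_id x).const_mul b).add (hasDerivAt_const x c))
  rw [h.deriv]; norm_num; ring

/-- Under `(δ+1)²·q_s < 4·δ·q_o` with `q_o > q_s > 0` and `δ ∈ (0,1)`, the unique
stationary point of the region-R1b revenue is
`(p_o*, p_r*) = (2δq_o(q_o−q_s)/(4δq_o − (δ+1)²q_s), q_s(δ+1)(q_o−q_s)/(4δq_o − (δ+1)²q_s))`. -/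
theorem R1b_unique_stationary_point (q_s q_o N δ : ℝ)
    (hq : q_o > q_s) (hqs : q_s > 0) (hN : N > 0) (hδ : δ ∈ Set.Ioo (0:ℝ) 1)
    (hc : (δ + 1) ^ 2 * q_s < 4 * δ * q_o) (p_o p_r : ℝ) :
    (deriv (fun x : ℝ =>
        N * δ * p_r * ((x - p_r) / (q_o - q_s) - p_r / q_s)
          + N * x * (1 - (x - p_r) / (q_o - q_s))) p_o = 0 ∧
     deriv (fun y : ℝ =>
        N * δ * y * ((p_o - y) / (q_o - q_s) - y / q_s)
          + N * p_o * (1 - (p_o - y) / (q_o - q_s))) p_r = 0)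
    ↔ (p_o = 2 * δ * q_o * (q_o - q_s) / (4 * δ * q_o - (δ + 1) ^ 2 * q_s) ∧
       p_r = q_s * (δ + 1) * (q_o - q_s) / (4 * δ * q_o - (δ + 1) ^ 2 * q_s)) := by
  obtain ⟨hδ0, hδ1⟩ := hδ
  have hA : q_o - q_s > 0 := by linarith
  have hA' : (q_o - q_s) ≠ 0 := ne_of_gt hA
  have hs' : q_s ≠ 0 := ne_of_gt hqs
  have hD : 4 * δ * q_o - (δ + 1) ^ 2 * q_s > 0 := by linarith
  have hD' : (4 * δ * q_o - (δ + 1) ^ 2 * q_s) ≠ 0 := ne_of_gt hD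
  have hN' : N ≠ 0 := ne_of_gt hN
  have hNA : N * (q_o - q_s) ≠ 0 := mul_ne_zero hN' hA'
  have e1 : (fun x : ℝ =>
      N * δ * p_r * ((x - p_r) / (q_o - q_s) - p_r / q_s)
        + N * x * (1 - (x - p_r) / (q_o - q_s)))
      = (fun x : ℝ => (-(N / (q_o - q_s))) * x ^ 2
        + ((N * δ * p_r / (q_o - q_s) + N + N * p_r / (q_o - q_s)) * x
        + (N * δ * p_r * (-p_r / (q_o - q_s) - p_r / q_s)))) := by
    funext x; field_simp; ring
  have e2 : (fun y : ℝ =>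
      N * δ * y * ((p_o - y) / (q_o - q_s) - y / q_s)
        + N * p_o * (1 - (p_o - y) / (q_o - q_s)))
      = (fun y : ℝ => (-(N * δ / (q_o - q_s)) - N * δ / q_s) * y ^ 2
        + ((N * δ * p_o / (q_o - q_s) + N * p_o / (q_o - q_s)) * y
        + (N * p_o * (1 - p_o / (q_o - q_s))))) := by
    funext y; field_simp; ring
  rw [e1, e2, quad_deriv, quad_deriv]
  constructor
  · rintro ⟨h1, h2⟩
    field_simp at h1 h2
    constructor
    · have key : N * (q_o - q_s) *
          (p_o * (4 * δ * q_o - (δ + 1) ^ 2 * q_s) - 2 * δ * q_o * (q_o - q_s)) = 0 := by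
        linear_combination (-(2 * δ * q_o) * (q_o - q_s)) * h1 - (δ + 1) * (q_o - q_s) * h2
      have h0 := (mul_eq_zero.mp key).resolve_left hNA
      rw [eq_div_iff hD']
      linarith
    · have key : N * (q_o - q_s) *
          (p_r * (4 * δ * q_o - (δ + 1) ^ 2 * q_s) - q_s * (δ + 1) * (q_o - q_s)) = 0 := by
        linear_combination (-(δ + 1) * q_s * (q_o - q_s)) * h1 - 2 * (q_o - q_s) * h2
      have h0 := (mul_eq_zero.mp key).resolve_left hNA
      rw [eq_div_iff hD']
      linarith
  · rintro ⟨hpo, hpr⟩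
    subst hpo hpr
    constructor
    · have hD2 : q_o * δ * 4 - q_s * (δ + 1) ^ 2 ≠ 0 := by
        contrapose! hD'; linear_combination hD'
      field_simp
      ring
    · field_simp
      ring
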